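/- If T ∈ B(X) is decomposable and N ∈ B(X) is nilpotent with TN = NT, then T + N is decomposable. -/

import Mathlib

open Filter Metric Polynomial

noncomputable section

variable {X : Type*} [NormedAddCommGroup X] [NormedSpace ℂ X]

/-- The commutator map `C(R,S)(A) = RA - AS`. -/
def commMap (R S : X →L[ℂ] X) : (X →L[ℂ] X) → (X →L[ℂ] X) := fun A => R ∘L A - A ∘L S

/-- Bishop's property (β) at a point `l0`. -/
def BishopBetaAt (T : X →L[ℂ] X) (l0 : ℂ) : Prop :=
  ∃ v > (0 : ℝ), ∀ U : Set ℂ, IsOpen U → U ⊆ ball l0 v →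
    ∀ f : ℕ → ℂ → X, (∀ n, AnalyticOnNhd ℂ (f n) U) →
      (∀ K ⊆ U, IsCompact K →
        TendstoUniformlyOn (fun n z => T (f n z) - z • f n z) 0 atTop K) →
      ∀ K ⊆ U, IsCompact K → TendstoUniformlyOn (fun n z => f n z) 0 atTop K

/-- The Banach-space dual (adjoint) operator `T*` acting on the dual space. -/
def dualOp (T : X →L[ℂ] X) : StrongDual ℂ X →L[ℂ] StrongDual ℂ X :=
  (ContinuousLinearMap.compL ℂ X X ℂ).flip T

/-- `T` is decomposable iff both `T` and its dual have Bishop's property (β) everywhere. -/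
def Decomposable (T : X →L[ℂ] X) : Prop :=
  (∀ l : ℂ, BishopBetaAt T l) ∧ ∀ l : ℂ, BishopBetaAt (dualOp T) l

lemma tuo_zero {ι : Type*} {p : Filter ι} {K : Set ℂ} :
    TendstoUniformlyOn (fun (_ : ι) (_ : ℂ) => (0 : X)) 0 p K := fun u hu =>
  Filter.Eventually.of_forall fun _ _ _ => refl_mem_uniformity hu

lemma tuo_clm_comp {ι : Type*} {p : Filter ι} {K : Set ℂ} (A : X →L[ℂ] X)
    {F : ι → ℂ → X} (h : TendstoUniformlyOn F 0 p K) :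
    TendstoUniformlyOn (fun n z => A (F n z)) 0 p K := by
  have := A.uniformContinuous.comp_tendstoUniformlyOn h
  rw [show (⇑A ∘ (0 : ℂ → X)) = 0 by funext z; simp] at this
  exact this

lemma tuo_sub {ι : Type*} {p : Filter ι} {K : Set ℂ}
    {F G : ι → ℂ → X} (hF : TendstoUniformlyOn F 0 p K)
    (hG : TendstoUniformlyOn G 0 p K) :
    TendstoUniformlyOn (fun n z => F n z - G n z) 0 p K := by
  have := hF.sub hG
  rw [sub_zero] at this
  exact this

/-- Key lemma: property (β) at a point is preserved under adding a commuting nilpotent. -/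
lemma bishopBetaAt_add_nilpotent (T N : X →L[ℂ] X) (m : ℕ) (hm : N ^ m = 0)
    (hc : T * N = N * T) (l : ℂ) (h : BishopBetaAt T l) : BishopBetaAt (T + N) l := by
  obtain ⟨v, hv, hβ⟩ := h
  refine ⟨v, hv, fun U hU hUb f hf herr => ?_⟩
  -- P k: N^k ∘ f n tends uniformly to 0 on every compact subset of U
  have key : ∀ k : ℕ, ∀ K ⊆ U, IsCompact K →
      TendstoUniformlyOn (fun n z => (N ^ k) (f n z)) 0 atTop K := by
    have step : ∀ k : ℕ, (∀ K ⊆ U, IsCompact K →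
        TendstoUniformlyOn (fun n z => (N ^ (k + 1)) (f n z)) 0 atTop K) →
        ∀ K ⊆ U, IsCompact K →
        TendstoUniformlyOn (fun n z => (N ^ k) (f n z)) 0 atTop K := by
      intro k ih
      set g : ℕ → ℂ → X := fun n z => (N ^ k) (f n z) with hg
      have hganal : ∀ n, AnalyticOnNhd ℂ (g n) U := by
        intro n
        have hNk : X →L[ℂ] X := N ^ k
        have := ContinuousLinearMap.comp_analyticOnNhd (𝕜 := ℂ) (f := f n) (N ^ k) (hf n)
        exact this
      have hTk : ∀ x, T ((N ^ k) x) = (N ^ k) (T x) := by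
        have hco : T * N ^ k = N ^ k * T := Commute.pow_right hc k
        intro x
        have := congrArg (fun A : X →L[ℂ] X => A x) hco
        simpa using this
      have herr' : ∀ K ⊆ U, IsCompact K →
          TendstoUniformlyOn (fun n z => T (g n z) - z • g n z) 0 atTop K := by
        intro K hK hKc
        have h1 := tuo_clm_comp (N ^ k) (herr K hK hKc)
        have h2 := ih K hK hKc
        have h3 := tuo_sub h1 h2
        have heq : (fun (n : ℕ) (z : ℂ) => T (g n z) - z • g n z) =
            fun n z => (N ^ k) ((T + N) (f n z) - z • f n z) - (N ^ (k + 1)) (f n z) := by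
          funext n z
          simp only [hg, ContinuousLinearMap.add_apply, map_add, map_sub, map_smul,
            hTk (f n z), pow_succ, ContinuousLinearMap.mul_apply]
          abel
        rw [heq]
        exact h3
      exact hβ U hU hUb g hganal herr'
    -- downward induction: for all d, P (m - d); in particular P 0 when d = m.
    have down : ∀ d : ℕ, ∀ K ⊆ U, IsCompact K →
        TendstoUniformlyOn (fun n z => (N ^ (m - d)) (f n z)) 0 atTop K := by
      intro d
      induction d with
      | zero =>
        intro K hK hKc
        simp only [Nat.sub_zero, hm]
        simpa using tuo_zero (ι := ℕ) (p := atTop) (K := K) (X := X)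
      | succ d ih =>
        rcases le_or_gt m d with hmd | hdm
        · have : m - (d + 1) = m - d := by omega
          rw [this]; exact ih
        · have hms : m - d = (m - (d + 1)) + 1 := by omega
          rw [hms] at ih
          exact step _ ih
    intro k K hK hKc
    rcases le_or_gt m k with hmk | hkm
    · have : N ^ k = 0 := by
        have : N ^ k = N ^ m * N ^ (k - m) := by rw [← pow_add]; congr 1; omega
        rw [this, hm, zero_mul]
      rw [this]
      simpa using tuo_zero (ι := ℕ) (p := atTop) (K := K) (X := X)
    · have := down (m - k) K hK hKc
      have hmk' : m - (m - k) = k := by omega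
      rwa [hmk'] at this
  intro K hK hKc
  have := key 0 K hK hKc
  simpa using this

lemma dualOp_apply (T : X →L[ℂ] X) (φ : StrongDual ℂ X) :
    dualOp T φ = φ.comp T := rfl

lemma dualOp_mul (A B : X →L[ℂ] X) : dualOp (A * B) = dualOp B * dualOp A := by
  ext φ x
  simp [dualOp_apply, ContinuousLinearMap.mul_apply]

lemma dualOp_add (A B : X →L[ℂ] X) : dualOp (A + B) = dualOp A + dualOp B := by
  ext φ x
  simp [dualOp_apply]

set_option synthInstance.maxHeartbeats 400000 in
lemma dualOp_pow (A : X →L[ℂ] X) (k : ℕ) : (dualOp A) ^ k = dualOp (A ^ k) := by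
  induction k with
  | zero =>
    ext φ x; simp [dualOp_apply]
  | succ k ih =>
    rw [pow_succ, ih, ← dualOp_mul, ← pow_succ']

theorem stmt16 [CompleteSpace X] (T N : X →L[ℂ] X)
    (hT : Decomposable T) (hN : ∃ m : ℕ, 1 ≤ m ∧ N ^ m = 0) (hcomm : T * N = N * T) :
    Decomposable (T + N) := by
  obtain ⟨m, _, hm⟩ := hN
  obtain ⟨hT1, hT2⟩ := hT
  constructor
  · intro l
    exact bishopBetaAt_add_nilpotent T N m hm hcomm l (hT1 l)
  · intro l
    have hdc : dualOp T * dualOp N = dualOp N * dualOp T := by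
      rw [← dualOp_mul, ← dualOp_mul, hcomm]
    have hdm : (dualOp N) ^ m = 0 := by
      rw [dualOp_pow, hm]
      ext φ x
      simp [dualOp_apply]
    have := bishopBetaAt_add_nilpotent (dualOp T) (dualOp N) m hdm hdc l (hT2 l)
    rwa [← dualOp_add] at this
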